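/- For every prime p and positive integer n, B_{n+p^m} \equiv \sum_{k=1}^{n} (B_{p^m} + k) * S(n,k) (mod p), for any positive integer m. -/

import Mathlib

/-- Stirling numbers of the second kind. -/
def stirling : ℕ → ℕ → ℕ
  | 0, 0 => 1
  | 0, _ + 1 => 0
  | _ + 1, 0 => 0
  | n + 1, k + 1 => stirling n k + (k + 1) * stirling n (k + 1)

/-- The `n`-th Bell number. -/
def bell (n : ℕ) : ℕ := ∑ k ∈ Finset.range (n + 1), stirling n k

open Finset


lemma stirling_succ_zero (n : ℕ) : stirling (n+1) 0 = 0 := rfl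

lemma stirling_zero_succ (k : ℕ) : stirling 0 (k+1) = 0 := rfl

lemma stirling_succ_succ (n k : ℕ) :
    stirling (n+1) (k+1) = stirling n k + (k+1) * stirling n (k+1) := rfl

lemma stirling_eq_zero_of_lt : ∀ {n k : ℕ}, n < k → stirling n k = 0 := by
  intro n
  induction n with
  | zero => intro k hk; match k, hk with | k+1, _ => rfl
  | succ n ih =>
    intro k hk
    match k, hk with
    | k+1, hk =>
      rw [stirling_succ_succ, ih (by omega), ih (by omega), mul_zero, add_zero]

lemma stirling_succ_one (n : ℕ) : stirling (n+1) 1 = 1 := by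
  induction n with
  | zero => rfl
  | succ n ih => rw [stirling_succ_succ, stirling_succ_zero, ih, zero_add, mul_one]

lemma stirling_succ_eq_sum (n k : ℕ) :
    stirling (n+1) (k+1) = ∑ j ∈ range (n+1), n.choose j * stirling j k := by
  induction n generalizing k with
  | zero =>
    rw [Finset.sum_range_one, Nat.choose_self, one_mul, stirling_succ_succ,
      stirling_zero_succ, mul_zero, add_zero]
  | succ n ih =>
    cases k with
    | zero =>
      rw [stirling_succ_one]
      rw [Finset.sum_range_succ' (fun j => (n+1).choose j * stirling j 0)]
      simp only [stirling_succ_zero, mul_zero]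
      simp only [Finset.sum_const_zero, zero_add, Nat.choose_zero_right, one_mul]
      rfl
    | succ k =>
      rw [stirling_succ_succ, ih, ih]
      rw [Finset.sum_range_succ' (fun j => (n+1).choose j * stirling j (k+1))]
      have key : ∀ j, (n+1).choose (j+1) * stirling (j+1) (k+1)
          = n.choose j * stirling j k + (k+1) * (n.choose j * stirling j (k+1))
            + n.choose (j+1) * stirling (j+1) (k+1) := by
        intro j
        rw [Nat.choose_succ_succ, add_mul, stirling_succ_succ]
        ring
      simp only [key]
      rw [Finset.sum_add_distrib, Finset.sum_add_distrib, ← Finset.mul_sum]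
      have h2 : ∑ j ∈ range (n+1), n.choose (j+1) * stirling (j+1) (k+1)
          = ∑ j ∈ range (n+1), n.choose j * stirling j (k+1) := by
        rw [Finset.sum_range_succ' (fun j => n.choose j * stirling j (k+1))]
        rw [Finset.sum_range_succ (fun j => n.choose (j+1) * stirling (j+1) (k+1))]
        rw [Nat.choose_succ_self, zero_mul, add_zero]
        simp [stirling_eq_zero_of_lt]
      rw [h2, stirling_zero_succ, mul_zero, add_zero]
      ring


lemma bell_zero : bell 0 = 1 := rfl

lemma sum_stirling_eq_bell {j N : ℕ} (h : j ≤ N) :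
    ∑ k ∈ range (N+1), stirling j k = bell j := by
  refine (Finset.sum_subset (Finset.range_subset_range.mpr (by omega)) fun x hx hx' => ?_).symm
  exact stirling_eq_zero_of_lt (by simp only [Finset.mem_range] at hx hx'; omega)

lemma bell_succ (n : ℕ) : bell (n+1) = ∑ j ∈ range (n+1), n.choose j * bell j := by
  show ∑ k ∈ range (n+1+1), stirling (n+1) k = _
  rw [Finset.sum_range_succ' (fun k => stirling (n+1) k), stirling_succ_zero, add_zero]
  simp only [stirling_succ_eq_sum]
  rw [Finset.sum_comm]
  refine Finset.sum_congr rfl fun j hj => ?_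
  rw [← Finset.mul_sum, sum_stirling_eq_bell (by simp only [Finset.mem_range] at hj; omega)]

def A (m k : ℕ) : ℕ := ∑ j ∈ range (m+1), m.choose j * k^(m-j) * bell j

lemma pow_succ_sum (N k : ℕ) : (k+1)^N = ∑ t ∈ range (N+1), N.choose t * k^(N-t) := by
  rw [add_comm k 1, add_pow]
  exact Finset.sum_congr rfl fun t _ => by rw [one_pow, one_mul, mul_comm, Nat.cast_id]

lemma choose_inner_sum {m i : ℕ} (k : ℕ) (h : i ≤ m) :
    ∑ j ∈ range (m+1), m.choose j * j.choose i * k^(m-j)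
      = m.choose i * (k+1)^(m-i) := by
  have h1 : ∑ j ∈ range (m+1), m.choose j * j.choose i * k^(m-j)
      = ∑ j ∈ Finset.Ico i (m+1), m.choose j * j.choose i * k^(m-j) := by
    refine (Finset.sum_subset (fun x hx => ?_) fun x hx hx' => ?_).symm
    · simp only [Finset.mem_Ico] at hx; exact Finset.mem_range.mpr hx.2
    · simp only [Finset.mem_range] at hx
      simp only [Finset.mem_Ico, not_and, not_lt] at hx'
      have hxi : x < i := by
        rcases Nat.lt_or_ge x i with h' | h'
        · exact h'
        · exact absurd hx (by simpa using hx' h')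
      rw [Nat.choose_eq_zero_of_lt hxi, mul_zero, zero_mul]
  rw [h1, Finset.sum_Ico_eq_sum_range, pow_succ_sum, Finset.mul_sum,
    show m + 1 - i = m - i + 1 by omega]
  refine Finset.sum_congr rfl fun t ht => ?_
  simp only [Finset.mem_range] at ht
  have h3 : m.choose (i+t) * (i+t).choose i = m.choose i * (m-i).choose t := by
    rw [Nat.choose_mul (by omega)]
    congr 2
    omega
  rw [h3, show m - (i + t) = m - i - t by omega, mul_assoc]

lemma sum_bell_succ_eq (m k : ℕ) :
    ∑ j ∈ range (m+1), m.choose j * k^(m-j) * bell (j+1) = A m (k+1) := by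
  have step : ∀ j ∈ range (m+1),
      m.choose j * k^(m-j) * bell (j+1)
        = ∑ i ∈ range (m+1), m.choose j * j.choose i * k^(m-j) * bell i := by
    intro j hj
    simp only [Finset.mem_range] at hj
    have hpad : ∑ i ∈ range (j+1), j.choose i * bell i
        = ∑ i ∈ range (m+1), j.choose i * bell i := by
      refine Finset.sum_subset (Finset.range_subset_range.mpr (by omega)) fun x hx hx' => ?_
      simp only [Finset.mem_range] at hx hx'
      rw [Nat.choose_eq_zero_of_lt (by omega), zero_mul]
    rw [bell_succ, hpad, Finset.mul_sum]
    exact Finset.sum_congr rfl fun i _ => by ring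
  rw [Finset.sum_congr rfl step, Finset.sum_comm]
  refine Finset.sum_congr rfl fun i hi => ?_
  simp only [Finset.mem_range] at hi
  rw [← Finset.sum_mul, choose_inner_sum k (by omega)]

lemma A_succ (m k : ℕ) : A (m+1) k = k * A m k + A m (k+1) := by
  have hS1 : k * A m k
      = (∑ j ∈ range (m+1), m.choose (j+1) * k^(m-j) * bell (j+1)) + k^(m+1) := by
    rw [A, Finset.mul_sum, Finset.sum_range_succ' (fun j => k * (m.choose j * k^(m-j) * bell j)) m]
    congr 1
    · rw [Finset.sum_range_succ (fun j => m.choose (j+1) * k^(m-j) * bell (j+1)) m,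
        Nat.choose_succ_self, zero_mul, zero_mul, add_zero]
      refine Finset.sum_congr rfl fun j hj => ?_
      simp only [Finset.mem_range] at hj
      rw [show m - j = (m - (j+1)) + 1 by omega, pow_succ]
      ring
    · rw [Nat.choose_zero_right, Nat.sub_zero, bell_zero, one_mul, mul_one, ← pow_succ']
  have hEx : A (m+1) k = (∑ j ∈ range (m+1), m.choose j * k^(m-j) * bell (j+1))
      + ((∑ j ∈ range (m+1), m.choose (j+1) * k^(m-j) * bell (j+1)) + k^(m+1)) := by
    rw [A, Finset.sum_range_succ' (fun j => (m+1).choose j * k^(m+1-j) * bell j) (m+1)]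
    have key : ∀ j, (m+1).choose (j+1) * k^(m+1-(j+1)) * bell (j+1)
        = m.choose j * k^(m-j) * bell (j+1) + m.choose (j+1) * k^(m-j) * bell (j+1) := by
      intro j
      rw [Nat.choose_succ_succ, show m+1-(j+1) = m - j by omega]
      ring
    rw [Finset.sum_congr rfl (fun j _ => key j), Finset.sum_add_distrib,
      Nat.choose_zero_right, one_mul, bell_zero, mul_one, Nat.sub_zero, add_assoc]
  rw [hEx, sum_bell_succ_eq, ← hS1, add_comm]

lemma spivey (n : ℕ) : ∀ m : ℕ, bell (n + m) = ∑ k ∈ range (n+1), stirling n k * A m k := by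
  induction n with
  | zero =>
    intro m
    rw [zero_add, Finset.sum_range_one,
      show stirling 0 0 = 1 from rfl, one_mul, A, Finset.sum_range_succ]
    have hz : ∀ j ∈ range m, m.choose j * 0^(m-j) * bell j = 0 := by
      intro j hj
      simp only [Finset.mem_range] at hj
      rw [zero_pow (by omega), mul_zero, zero_mul]
    rw [Finset.sum_eq_zero hz, zero_add, Nat.choose_self, Nat.sub_self, pow_zero,
      one_mul, one_mul]
  | succ n ih =>
    intro m
    rw [show n + 1 + m = n + (m + 1) by omega, ih (m+1),
      Finset.sum_range_succ' (fun k => stirling (n+1) k * A m k) (n+1),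
      stirling_succ_zero, zero_mul, add_zero]
    have key : ∀ k, stirling (n+1) (k+1) * A m (k+1)
        = stirling n k * A m (k+1) + (k+1) * stirling n (k+1) * A m (k+1) := by
      intro k; rw [stirling_succ_succ]; ring
    rw [Finset.sum_congr rfl (fun k _ => key k), Finset.sum_add_distrib]
    have h2 : ∑ k ∈ range (n+1), (k+1) * stirling n (k+1) * A m (k+1)
        = ∑ k ∈ range (n+1), k * stirling n k * A m k := by
      rw [Finset.sum_range_succ' (fun k => k * stirling n k * A m k) n,
        Finset.sum_range_succ (fun k => (k+1) * stirling n (k+1) * A m (k+1)) n,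
        stirling_eq_zero_of_lt (Nat.lt_succ_self n), mul_zero, zero_mul, add_zero]
      simp
    rw [h2, ← Finset.sum_add_distrib]
    refine Finset.sum_congr rfl fun k _ => ?_
    rw [A_succ]
    ring

theorem bell_add_prime_pow_sum (p n m : ℕ) (hp : p.Prime) (hn : 0 < n) (hm : 0 < m) :
    bell (n + p ^ m) ≡ ∑ k ∈ Finset.Icc 1 n, (bell (p ^ m) + k) * stirling n k [MOD p] := by
  haveI : Fact p.Prime := ⟨hp⟩
  rw [← ZMod.natCast_eq_natCast_iff]
  have hA : ∀ k : ℕ, ((A (p^m) k : ℕ) : ZMod p) = (k : ZMod p) + (bell (p^m) : ZMod p) := by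
    intro k
    rw [A]
    push_cast
    rw [Finset.sum_range_succ]
    have h1 : ∑ j ∈ range (p^m), ((p^m).choose j : ZMod p) * (k:ZMod p)^(p^m - j)
        * (bell j : ZMod p) = (k : ZMod p) := by
      rw [Finset.sum_eq_single_of_mem 0 (Finset.mem_range.mpr (pow_pos hp.pos m))]
      · rw [Nat.choose_zero_right, Nat.sub_zero, bell_zero]
        push_cast
        rw [one_mul, mul_one, ZMod.pow_card_pow]
      · intro j hj hj0
        have hz : (((p^m).choose j : ℕ) : ZMod p) = 0 := by
          rw [ZMod.natCast_eq_zero_iff]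
          exact hp.dvd_choose_pow hj0 (by simp only [Finset.mem_range] at hj; omega)
        rw [hz, zero_mul, zero_mul]
    rw [h1, Nat.choose_self, Nat.sub_self, pow_zero]
    push_cast
    ring
  have lhs_eq : ((bell (n + p^m) : ℕ) : ZMod p)
      = ∑ k ∈ range (n+1), (stirling n k : ZMod p) * ((k : ZMod p) + (bell (p^m) : ZMod p)) := by
    rw [spivey n (p^m)]
    push_cast
    exact Finset.sum_congr rfl fun k _ => by rw [hA]
  rw [lhs_eq]
  push_cast
  have rhs_eq : ∑ k ∈ Finset.Icc 1 n, ((bell (p^m) : ZMod p) + (k : ZMod p)) * (stirling n k : ZMod p)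
      = ∑ k ∈ range (n+1), ((bell (p^m) : ZMod p) + (k : ZMod p)) * (stirling n k : ZMod p) := by
    refine Finset.sum_subset (fun x hx => ?_) (fun x hx hx' => ?_)
    · simp only [Finset.mem_Icc] at hx; exact Finset.mem_range.mpr (by omega)
    · simp only [Finset.mem_range] at hx
      simp only [Finset.mem_Icc, not_and, not_le] at hx'
      have hx0 : x = 0 := by omega
      subst hx0
      obtain ⟨n', rfl⟩ : ∃ n', n = n' + 1 := ⟨n-1, by omega⟩
      rw [stirling_succ_zero]
      push_cast
      ring
  rw [rhs_eq]
  exact Finset.sum_congr rfl fun k _ => by ring
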